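/- arXiv:1101.3977 — 8 statements merged into one kernel-verified Lean document; each statement's English description precedes it below -/
import Mathlib

section
/- Let A be an Artinian local principal ideal ring with maximal ideal (t). Then the set of zero divisors of the polynomial ring A[x] equals the ideal generated by t in A[x]. -/
/-- `r` is a zero divisor. -/
def IsZD {R : Type*} [CommRing R] (r : R) : Prop := ∃ s : R, s ≠ 0 ∧ r * s = 0

/-- `R` has only harmless zero divisors: every zero divisor is `1 - u` for a unit `u`. -/
def OnlyHarmlessZD (R : Type*) [CommRing R] : Prop :=
  ∀ r : R, IsZD r → ∃ u : Rˣ, r = 1 - (u : R)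

/-- `r` is irreducible in the classical (Galovich) sense. -/
def Irr {R : Type*} [CommRing R] (r : R) : Prop :=
  ∀ a b : R, r = a * b → IsUnit a ∨ IsUnit b

/-- `r` is B-irreducible: `(r)` is maximal among proper principal ideals. -/
def Birr {R : Type*} [CommRing R] (r : R) : Prop :=
  Ideal.span ({r} : Set R) ≠ ⊤ ∧
    ∀ s : R, Ideal.span ({r} : Set R) ≤ Ideal.span ({s} : Set R) →
      Ideal.span ({s} : Set R) = ⊤ ∨ Ideal.span ({s} : Set R) = Ideal.span ({r} : Set R)

/-- `r` is F-irreducible (Fletcher): `r = a * b` implies `a ∈ (r)` or `b ∈ (r)`. -/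
def Firr {R : Type*} [CommRing R] (r : R) : Prop :=
  ¬ IsUnit r ∧
    ∀ a b : R, r = a * b → a ∈ Ideal.span ({r} : Set R) ∨ b ∈ Ideal.span ({r} : Set R)

lemma isZD_of_nilpotent {R : Type*} [CommRing R] [Nontrivial R] {r : R}
    (h : IsNilpotent r) : IsZD r := by
  obtain ⟨n, hn⟩ := h
  induction n with
  | zero =>
    rw [pow_zero] at hn
    exact absurd hn one_ne_zero
  | succ k ih =>
    by_cases hk : r ^ k = 0
    · exact ih hk
    · exact ⟨r ^ k, hk, by rw [← pow_succ']; exact hn⟩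

theorem stmt_2 (A : Type*) [CommRing A] [IsArtinianRing A] [IsLocalRing A]
    [IsPrincipalIdealRing A] (t : A)
    (ht : Ideal.span ({t} : Set A) = IsLocalRing.maximalIdeal A) :
    ∀ f : Polynomial A,
      IsZD f ↔ f ∈ Ideal.span ({Polynomial.C t} : Set (Polynomial A)) := by
  have htn : IsNilpotent t := by
    obtain ⟨n, hn⟩ := IsArtinianRing.isNilpotent_jacobson_bot (R := A)
    have htm : t ∈ IsLocalRing.maximalIdeal A := ht ▸ Ideal.mem_span_singleton_self t
    refine ⟨n, ?_⟩
    have : t ^ n ∈ (Ideal.jacobson (⊥ : Ideal A)) ^ n :=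
      Ideal.pow_mem_pow (by rwa [IsLocalRing.jacobson_eq_maximalIdeal ⊥ bot_ne_top]) n
    rw [hn] at this
    simpa using this
  have hspan : Ideal.span ({Polynomial.C t} : Set (Polynomial A)) =
      Ideal.map Polynomial.C (Ideal.span {t}) := by
    rw [Ideal.map_span]; simp
  intro f
  constructor
  · rintro ⟨g, hg, hfg⟩
    have hf : f ∉ nonZeroDivisors (Polynomial A) := fun hmem =>
      hg (hmem.2 g (by rwa [mul_comm]))
    obtain ⟨a, ha, haf⟩ := Polynomial.notMem_nonZeroDivisors_iff.1 hf
    rw [hspan, Ideal.mem_map_C_iff]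
    intro n
    rw [ht]
    by_contra hcoeff
    have hu : IsUnit (f.coeff n) := IsLocalRing.notMem_maximalIdeal.mp hcoeff
    have : a * f.coeff n = 0 := by
      have := congrArg (fun p => Polynomial.coeff p n) haf
      simpa [Polynomial.coeff_smul, smul_eq_mul] using this
    exact ha (by
      obtain ⟨u, hu⟩ := hu
      have := congrArg (fun x => x * (↑u⁻¹ : A)) this
      simpa [← hu, mul_assoc] using this)
  · intro hf
    rw [Ideal.mem_span_singleton] at hf
    obtain ⟨g, hg⟩ := hf
    have : IsNilpotent f := by
      rw [hg]
      exact (Commute.all _ g).isNilpotent_mul_right (htn.map Polynomial.C)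
    exact isZD_of_nilpotent this
end

section
/- Let A be an Artinian local principal ideal ring. Then the polynomial ring A[x] is a ring with only harmless zero divisors. -/
theorem stmt_3 (A : Type*) [CommRing A] [IsArtinianRing A] [IsLocalRing A]
    [IsPrincipalIdealRing A] : OnlyHarmlessZD (Polynomial A) := by
  intro f hf
  obtain ⟨g, hg, hfg⟩ := hf
  -- f is not a nonzerodivisor
  have hfnz : f ∉ nonZeroDivisors (Polynomial A) := by
    intro h
    exact hg (h.2 g (by rw [mul_comm] at hfg; exact hfg))
  obtain ⟨a, ha, haf⟩ := Polynomial.notMem_nonZeroDivisors_iff.mp hfnz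
  -- every coefficient of f is annihilated by a, hence is a nonunit, hence nilpotent
  obtain ⟨n, hn⟩ := IsArtinianRing.isNilpotent_jacobson_bot (R := A)
  have hnil : IsNilpotent f := by
    rw [Polynomial.isNilpotent_iff]
    intro i
    have hai : a * f.coeff i = 0 := by
      have := congrArg (fun p => Polynomial.coeff p i) haf
      simpa [Polynomial.coeff_smul, smul_eq_mul] using this
    have hnu : ¬ IsUnit (f.coeff i) := by
      intro hu
      obtain ⟨u, hu⟩ := hu
      apply ha
      have : a * (f.coeff i * (u⁻¹ : Aˣ)) = 0 := by
        rw [← mul_assoc, hai, zero_mul]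
      rwa [← hu, Units.mul_inv, mul_one] at this
    have hmem : f.coeff i ∈ (⊥ : Ideal A).jacobson := by
      rw [IsLocalRing.jacobson_eq_maximalIdeal ⊥ bot_ne_top]
      exact hnu
    exact ⟨n, by
      have := Ideal.pow_mem_pow hmem n
      rw [hn] at this
      simpa using this⟩
  obtain ⟨u, hu⟩ := (hnil.isUnit_one_sub)
  exact ⟨u, by rw [hu]; ring⟩
end

section
/- Let R be a ring with only harmless zero divisors. Then every B-irreducible element of R is irreducible. -/
theorem stmt_7 (R : Type*) [CommRing R] (hR : OnlyHarmlessZD R) (r : R)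
    (h0 : r ≠ 0) (hu : ¬ IsUnit r) (h : Birr r) : Irr r := by
  intro a b hab
  have hle : Ideal.span ({r} : Set R) ≤ Ideal.span ({a} : Set R) :=
    Ideal.span_singleton_le_span_singleton.mpr ⟨b, hab⟩
  rcases h.2 a hle with htop | heq
  · left
    rwa [Ideal.span_singleton_eq_top] at htop
  · right
    have hdvd : r ∣ a := Ideal.span_singleton_le_span_singleton.mp heq.le
    obtain ⟨c, hc⟩ := hdvd
    have hz : (1 - c * b) * r = 0 := by
      have : r = r * c * b := by rw [← hc, ← hab]
      linear_combination this
    obtain ⟨u, hu'⟩ := hR (1 - c * b) ⟨r, h0, hz⟩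
    have hcb : c * b = (u : R) := by linear_combination -hu'
    exact IsUnit.of_mul_eq_one (a := b) (c * ↑u⁻¹) (by
      rw [show b * (c * ↑u⁻¹) = c * b * ↑u⁻¹ by ring, hcb, Units.mul_inv])
end

section
/- For a non-unit r in a commutative ring with unity R, the following are equivalent: (1) r is F-irreducible, i.e., every factorization of r into finitely many factors admits a refinement containing r as one of the factors; (2) whenever r = ab, either a ∈ (r) or b ∈ (r); (3) whenever r = ab, either (r) = (a) or (r) = (b). -/
/-- `r` is F-irreducible in terms of refinements of factorizations: every factorization
`r = l.prod` (into finitely many factors) has a refinement (each factor of `l` is further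
factored into a list of factors) containing `r` as one of the new factors. -/
def FirrRefine {R : Type*} [CommRing R] (r : R) : Prop :=
  ∀ l : List R, l.prod = r →
    ∃ L : List (List R), List.Forall₂ (fun m (a : R) => m.prod = a) L l ∧ r ∈ L.flatten


section Aux
variable {R : Type*} [CommRing R]

/-- The idempotent argument: if `r = x*c*t.prod` and `r` divides all three pairwise
products, then `r` divides `x`, `c`, or some element of `t`. -/
lemma idem_case (r x c : R) (t : List R) (hu : ¬ IsUnit r)
    (h2 : ∀ a b : R, r = a * b → r ∣ a ∨ r ∣ b)
    (hr : r = x * c * t.prod)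
    (hxc : r ∣ x * c) (hxt : r ∣ x * t.prod) (hct : r ∣ c * t.prod) :
    r ∣ x ∨ r ∣ c ∨ ∃ a ∈ t, r ∣ a := by
  obtain ⟨w, hw⟩ := hxc
  obtain ⟨t1, ht1⟩ := hxt
  obtain ⟨s1, hs1⟩ := hct
  set m : R := w * t1 * s1 with hm
  have hrm : r = r * r * m := by
    have h1 : r = r * (x * s1) := by
      calc r = x * (c * t.prod) := by linear_combination hr
        _ = x * (r * s1) := by rw [hs1]
        _ = r * (x * s1) := by ring
    have h2' : r = r * (c * t1) := by
      calc r = c * (x * t.prod) := by linear_combination hr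
        _ = c * (r * t1) := by rw [ht1]
        _ = r * (c * t1) := by ring
    have h3 : r = r * (t.prod * w) := by
      calc r = (x * c) * t.prod := hr
        _ = (r * w) * t.prod := by rw [hw]
        _ = r * (t.prod * w) := by ring
    calc r = r * (x * s1) := h1
      _ = (r * (c * t1)) * (x * s1) := by rw [← h2']
      _ = ((r * (t.prod * w)) * (c * t1)) * (x * s1) := by rw [← h3]
      _ = r * (x * c * t.prod) * (w * t1 * s1) := by ring
      _ = r * r * m := by rw [← hr, hm]
  set f : R := 1 - r * m with hf
  have hfr : f * r = 0 := by rw [hf]; linear_combination hrm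
  have hfd1 : ∀ u : R, f * u = 0 → r ∣ u := by
    intro u h
    exact ⟨m * u, by rw [hf] at h; linear_combination h⟩
  have hdf : ∀ u : R, r ∣ u → f * u = 0 := by
    rintro u ⟨z, rfl⟩
    linear_combination z * hfr
  have hdom : ∀ u v : R, f * (u * v) = 0 → f * u = 0 ∨ f * v = 0 := by
    intro u v huv
    rw [hf] at huv
    have hfact : r = (r * m + f * u) * (r + f * v) := by
      rw [hf]; linear_combination (1 - m * v - u) * hrm - (1 - r * m) * huv
    rcases h2 _ _ hfact with h | h
    · have h' := hdf _ h
      rw [hf] at h' ⊢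
      left; linear_combination h' + (m * u - m) * hrm
    · have h' := hdf _ h
      rw [hf] at h' ⊢
      right; linear_combination h' + (m * v - 1) * hrm
  have hlist : ∀ (s : List R), f * s.prod = 0 → ∃ a ∈ s, r ∣ a := by
    intro s
    induction s with
    | nil =>
      intro h
      rw [List.prod_nil, mul_one] at h
      exact (hu (IsUnit.of_mul_eq_one (a := r) m (by rw [hf] at h; linear_combination -h))).elim
    | cons a s ih =>
      intro h
      rw [List.prod_cons] at h
      rcases hdom a s.prod h with h1 | h1
      · exact ⟨a, List.mem_cons_self, hfd1 a h1⟩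
      · obtain ⟨b, hb, hd⟩ := ih h1
        exact ⟨b, List.mem_cons_of_mem a hb, hd⟩
  have h0 : f * (x * (c * t.prod)) = 0 := by
    have : x * (c * t.prod) = r := by linear_combination -hr
    rw [this]; exact hfr
  rcases hdom x (c * t.prod) h0 with h1 | h1
  · exact Or.inl (hfd1 x h1)
  · rcases hdom c t.prod h1 with h3 | h3
    · exact Or.inr (Or.inl (hfd1 c h3))
    · exact Or.inr (Or.inr (hlist t h3))

lemma key_lemma (r : R) (hu : ¬ IsUnit r)
    (h2 : ∀ a b : R, r = a * b → r ∣ a ∨ r ∣ b) :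
    ∀ (l : List R) (x : R), r = x * l.prod → r ∣ l.prod →
      r ∣ x ∨ ∃ a ∈ l, r ∣ a := by
  intro l
  induction l with
  | nil =>
    intro x hx _
    left
    exact ⟨1, by rw [List.prod_nil, mul_one] at hx; rw [← hx, mul_one]⟩
  | cons c t ih =>
    intro x hx hdl
    rw [List.prod_cons] at hx hdl
    rcases h2 c (x * t.prod) (by linear_combination hx) with hc | hxt
    · exact Or.inr ⟨c, List.mem_cons_self, hc⟩
    · rcases h2 (x * c) t.prod (by linear_combination hx) with hxc | ht
      · rcases idem_case r x c t hu h2 (by linear_combination hx) hxc hxt hdl with h | h | ⟨a, ha, hd⟩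
        · exact Or.inl h
        · exact Or.inr ⟨c, List.mem_cons_self, h⟩
        · exact Or.inr ⟨a, List.mem_cons_of_mem c ha, hd⟩
      · rcases ih (x * c) (by linear_combination hx) ht with hxc | ⟨a, ha, hd⟩
        · rcases idem_case r x c t hu h2 (by linear_combination hx) hxc hxt hdl with h | h | ⟨a, ha, hd⟩
          · exact Or.inl h
          · exact Or.inr ⟨c, List.mem_cons_self, h⟩
          · exact Or.inr ⟨a, List.mem_cons_of_mem c ha, hd⟩
        · exact Or.inr ⟨a, List.mem_cons_of_mem c ha, hd⟩

lemma exists_dvd (r : R) (hu : ¬ IsUnit r)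
    (h2 : ∀ a b : R, r = a * b → r ∣ a ∨ r ∣ b)
    (l : List R) (hl : l.prod = r) : ∃ a ∈ l, r ∣ a := by
  cases l with
  | nil =>
    rw [List.prod_nil] at hl
    exact (hu (hl ▸ isUnit_one)).elim
  | cons c t =>
    rw [List.prod_cons] at hl
    rcases h2 c t.prod hl.symm with hc | ht
    · exact ⟨c, List.mem_cons_self, hc⟩
    · rcases key_lemma r hu h2 t c hl.symm ht with hc | ⟨a, ha, hd⟩
      · exact ⟨c, List.mem_cons_self, hc⟩
      · exact ⟨a, List.mem_cons_of_mem c ha, hd⟩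

lemma build_refinement (r : R) :
    ∀ (l : List R) (a : R), a ∈ l → r ∣ a →
      ∃ L : List (List R), List.Forall₂ (fun m (x : R) => m.prod = x) L l ∧ r ∈ L.flatten := by
  intro l
  induction l with
  | nil => intro a ha; exact absurd ha List.not_mem_nil
  | cons b t ih =>
    intro a ha hd
    rcases List.mem_cons.mp ha with rfl | hat
    · obtain ⟨cc, hcc⟩ := hd
      refine ⟨[r, cc] :: t.map (fun x => [x]), List.Forall₂.cons ?_ ?_, by simp⟩
      · simp [hcc]
      · rw [List.forall₂_map_left_iff]
        exact List.forall₂_same.2 (fun x _ => by simp)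
    · obtain ⟨L, hL, hmem⟩ := ih a hat hd
      exact ⟨[b] :: L, List.Forall₂.cons (by simp) hL, by simp [hmem]⟩

end Aux

theorem stmt_8 (R : Type*) [CommRing R] (r : R) (hu : ¬ IsUnit r) :
    (FirrRefine r ↔
      ∀ a b : R, r = a * b →
        a ∈ Ideal.span ({r} : Set R) ∨ b ∈ Ideal.span ({r} : Set R)) ∧
    ((∀ a b : R, r = a * b →
        a ∈ Ideal.span ({r} : Set R) ∨ b ∈ Ideal.span ({r} : Set R)) ↔
      ∀ a b : R, r = a * b →
        Ideal.span ({r} : Set R) = Ideal.span ({a} : Set R) ∨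
          Ideal.span ({r} : Set R) = Ideal.span ({b} : Set R)) := by
  constructor
  · constructor
    · intro h a b hab
      obtain ⟨L, hF, hmem⟩ := h [a, b] (by simp [hab])
      rcases hF with _ | ⟨hm1, hF2⟩
      rename_i m1 L'
      rcases hF2 with _ | ⟨hm2, hF3⟩
      rename_i m2 L''
      rcases hF3
      simp only [List.flatten, List.append_eq, List.append_nil, List.mem_append] at hmem
      rcases hmem with h1 | h1
      · exact Or.inl (Ideal.mem_span_singleton.mpr (hm1 ▸ List.dvd_prod h1))
      · exact Or.inr (Ideal.mem_span_singleton.mpr (hm2 ▸ List.dvd_prod h1))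
    · intro h l hl
      have h2 : ∀ a b : R, r = a * b → r ∣ a ∨ r ∣ b := by
        intro a b hab
        rcases h a b hab with h' | h'
        · exact Or.inl (Ideal.mem_span_singleton.mp h')
        · exact Or.inr (Ideal.mem_span_singleton.mp h')
      obtain ⟨a, ha, hd⟩ := exists_dvd r hu h2 l hl
      exact build_refinement r l a ha hd
  · constructor
    · intro h a b hab
      rcases h a b hab with h' | h'
      · left
        apply le_antisymm
        · exact Ideal.span_singleton_le_span_singleton.mpr ⟨b, hab⟩
        · exact Ideal.span_singleton_le_span_singleton.mpr
            (Ideal.mem_span_singleton.mp h')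
      · right
        apply le_antisymm
        · exact Ideal.span_singleton_le_span_singleton.mpr ⟨a, by linear_combination hab⟩
        · exact Ideal.span_singleton_le_span_singleton.mpr
            (Ideal.mem_span_singleton.mp h')
    · intro h a b hab
      rcases h a b hab with h' | h'
      · exact Or.inl (h' ▸ Ideal.mem_span_singleton_self a)
      · exact Or.inr (h' ▸ Ideal.mem_span_singleton_self b)
end

section
/- Let R be a commutative ring with unity. Every B-irreducible element of R is F-irreducible. -/
theorem stmt_9 (R : Type*) [CommRing R] (r : R) (h0 : r ≠ 0) (hu : ¬ IsUnit r)
    (h : Birr r) : Firr r := by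
  refine ⟨hu, fun a b hab => ?_⟩
  have hle : Ideal.span ({r} : Set R) ≤ Ideal.span ({a} : Set R) := by
    rw [Ideal.span_singleton_le_span_singleton]
    exact ⟨b, hab⟩
  rcases h.2 a hle with h1 | h2
  · right
    have ha : IsUnit a := by
      rwa [Ideal.span_singleton_eq_top] at h1
    obtain ⟨u, rfl⟩ := ha
    rw [Ideal.mem_span_singleton]
    exact ⟨(u⁻¹ : Rˣ), by rw [hab, mul_comm (u:R) b, mul_assoc, Units.mul_inv, mul_one]⟩
  · left
    rw [← h2]
    exact Ideal.mem_span_singleton_self a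
end

section
/- Let R be a ring with only harmless zero divisors and let r ∈ R be a nonzero F-irreducible element. Then r is B-irreducible. -/
theorem stmt_10 (R : Type*) [CommRing R] (hR : OnlyHarmlessZD R) (r : R)
    (h0 : r ≠ 0) (h : Firr r) : Birr r := by
  obtain ⟨hnu, hfac⟩ := h
  constructor
  · simpa [Ideal.span_singleton_eq_top] using hnu
  · intro s hle
    rw [Ideal.span_singleton_le_span_singleton] at hle
    obtain ⟨b, hb⟩ := hle
    rcases hfac s b hb with hs | hbb
    · right
      rw [Ideal.mem_span_singleton] at hs
      exact le_antisymm (Ideal.span_singleton_le_span_singleton.mpr hs)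
        (Ideal.span_singleton_le_span_singleton.mpr ⟨b, hb⟩)
    · left
      rw [Ideal.mem_span_singleton] at hbb
      obtain ⟨c, hc⟩ := hbb
      have hzero : r * (1 - s * c) = 0 := by
        have h1 : r = s * (r * c) := by rw [← hc]; exact hb
        linear_combination h1
      by_cases hone : (1 : R) - s * c = 0
      · rw [Ideal.span_singleton_eq_top]
        exact IsUnit.of_mul_eq_one (a := s) c (by linear_combination -hone)
      · have hzd : IsZD (1 - s * c) := ⟨r, h0, by rw [mul_comm]; exact hzero⟩
        obtain ⟨u, hu⟩ := hR _ hzd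
        have hsc : s * c = (u : R) := by linear_combination -hu
        rw [Ideal.span_singleton_eq_top]
        exact isUnit_of_mul_isUnit_left (hsc ▸ u.isUnit)
end

section
/- In a ring R with only harmless zero divisors, for a nonzero non-unit element r, the three conditions are equivalent: r is irreducible, r is B-irreducible, and r is F-irreducible. -/
theorem stmt_11 (R : Type*) [CommRing R] (hR : OnlyHarmlessZD R) (r : R)
    (h0 : r ≠ 0) (hu : ¬ IsUnit r) :
    (Irr r ↔ Birr r) ∧ (Birr r ↔ Firr r) := by
  -- key lemma: if r * (1 - y) = 0 then y is a unit
  have key : ∀ y : R, r * (1 - y) = 0 → IsUnit y := by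
    intro y hy
    by_cases h : (1 : R) - y = 0
    · have : y = 1 := by linear_combination -h
      rw [this]; exact isUnit_one
    · have hzd : IsZD (1 - y) := ⟨r, h0, by rw [mul_comm]; exact hy⟩
      obtain ⟨u, hu'⟩ := hR _ hzd
      have : y = (u : R) := by linear_combination -hu'
      rw [this]; exact u.isUnit
  have irr_of_birr : Birr r → Irr r := by
    rintro ⟨_, hmax⟩ a b hab
    by_contra hcon
    push_neg at hcon
    obtain ⟨ha, hb⟩ := hcon
    have hle : Ideal.span ({r} : Set R) ≤ Ideal.span ({a} : Set R) := by
      rw [Ideal.span_singleton_le_span_singleton]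
      exact ⟨b, hab⟩
    rcases hmax a hle with h | h
    · exact ha (Ideal.span_singleton_eq_top.mp h)
    · have : r ∣ a := by
        rw [← Ideal.span_singleton_le_span_singleton]
        exact h.le
      obtain ⟨c, hc⟩ := this
      have : r * (1 - c * b) = 0 := by
        linear_combination hab + b * hc
      have := key _ this
      exact hb (isUnit_of_mul_isUnit_right (by rwa [mul_comm] at this))
  have birr_of_irr : Irr r → Birr r := by
    intro hirr
    refine ⟨fun h => hu (Ideal.span_singleton_eq_top.mp h), fun s hle => ?_⟩
    rw [Ideal.span_singleton_le_span_singleton] at hle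
    obtain ⟨c, hc⟩ := hle
    rcases hirr s c hc with h | h
    · exact Or.inl (Ideal.span_singleton_eq_top.mpr h)
    · right
      apply le_antisymm
      · rw [Ideal.span_singleton_le_span_singleton]
        obtain ⟨v, rfl⟩ := h
        exact ⟨↑v⁻¹, by rw [hc]; simp⟩
      · rw [Ideal.span_singleton_le_span_singleton]
        exact ⟨c, hc⟩
  have firr_of_irr : Irr r → Firr r := by
    intro hirr
    refine ⟨hu, fun a b hab => ?_⟩
    rcases hirr a b hab with h | h
    · right
      rw [Ideal.mem_span_singleton]
      obtain ⟨v, rfl⟩ := h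
      exact ⟨↑v⁻¹, by rw [hab]; rw [mul_comm (↑v : R) b, Units.mul_inv_cancel_right]⟩
    · left
      rw [Ideal.mem_span_singleton]
      obtain ⟨v, rfl⟩ := h
      exact ⟨↑v⁻¹, by rw [hab]; simp⟩
  have birr_of_firr : Firr r → Birr r := by
    rintro ⟨hu', hf⟩
    refine ⟨fun h => hu (Ideal.span_singleton_eq_top.mp h), fun s hle => ?_⟩
    rw [Ideal.span_singleton_le_span_singleton] at hle
    obtain ⟨c, hc⟩ := hle
    rcases hf s c hc with h | h
    · right
      apply le_antisymm
      · rw [Ideal.span_singleton_le_span_singleton, ← Ideal.mem_span_singleton]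
        exact h
      · rw [Ideal.span_singleton_le_span_singleton]
        exact ⟨c, hc⟩
    · left
      rw [Ideal.mem_span_singleton] at h
      obtain ⟨d, hd⟩ := h
      have : r * (1 - s * d) = 0 := by
        linear_combination hc + s * hd
      have := key _ this
      exact Ideal.span_singleton_eq_top.mpr (isUnit_of_mul_isUnit_left this)
  exact ⟨⟨birr_of_irr, irr_of_birr⟩,
    ⟨fun h => firr_of_irr (irr_of_birr h), birr_of_firr⟩⟩
end

section
/- Let B = A_1 × ⋯ × A_n be a direct product of commutative rings with unity, and let (a_1, …, a_n) be a nonzero non-unit F-irreducible element of B. Then there exists an index i such that a_i is F-irreducible in A_i and a_j is a unit in A_j for all j ≠ i. -/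
theorem stmt_12 (n : ℕ) (A : Fin n → Type*) [∀ i, CommRing (A i)]
    (a : ∀ i, A i) (h0 : a ≠ 0) (hu : ¬ IsUnit a) (h : Firr a) :
    ∃ i, Firr (a i) ∧ ∀ j, j ≠ i → IsUnit (a j) := by
  obtain ⟨hnu, hfac⟩ := h
  -- there is a non-unit coordinate
  have hex : ∃ i, ¬ IsUnit (a i) := by
    by_contra hc
    push_neg at hc
    exact hu (IsUnit.of_mul_eq_one (a := a) (fun i => (((hc i).unit⁻¹ : (A i)ˣ) : A i))
      (funext fun i => by simp))
  obtain ⟨i, hi⟩ := hex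
  refine ⟨i, ?_, ?_⟩
  · -- a i is Firr
    refine ⟨hi, fun x y hxy => ?_⟩
    set b : ∀ k, A k := Function.update a i x with hb
    set c : ∀ k, A k := Function.update (1 : ∀ k, A k) i y with hc
    have habc : a = b * c := by
      funext k
      by_cases hk : k = i
      · subst hk; simp [hb, hc, hxy]
      · simp [hb, hc, Function.update_of_ne hk]
    rcases hfac b c habc with hm | hm
    · left
      rw [Ideal.mem_span_singleton] at hm ⊢
      obtain ⟨d, hd⟩ := hm
      exact ⟨d i, by have := congrFun hd i; simpa [hb] using this⟩
    · right
      rw [Ideal.mem_span_singleton] at hm ⊢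
      obtain ⟨d, hd⟩ := hm
      exact ⟨d i, by have := congrFun hd i; simpa [hc] using this⟩
  · intro j hj
    by_contra hjnu
    set b : ∀ k, A k := Function.update a j 1 with hb
    set c : ∀ k, A k := Function.update (1 : ∀ k, A k) j (a j) with hc
    have habc : a = b * c := by
      funext k
      by_cases hk : k = j
      · subst hk; simp [hb, hc]
      · simp [hb, hc, Function.update_of_ne hk]
    rcases hfac b c habc with hm | hm
    · rw [Ideal.mem_span_singleton] at hm
      obtain ⟨d, hd⟩ := hm
      have := congrFun hd j
      simp [hb] at this
      exact hjnu (IsUnit.of_mul_eq_one _ this.symm)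
    · rw [Ideal.mem_span_singleton] at hm
      obtain ⟨d, hd⟩ := hm
      have := congrFun hd i
      simp [hc, Function.update_of_ne (Ne.symm hj)] at this
      exact hi (IsUnit.of_mul_eq_one _ this.symm)
end
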